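/- Let a and b be operators on ℂ² satisfying ab + ba = 1, a² = 0, b² = 0, with vacua φ₀ (aφ₀ = 0) and Ψ₀ (b*Ψ₀ = 0) normalized by ⟨φ₀,Ψ₀⟩ = 1; set φ₁ := bφ₀, Ψ₁ := a*Ψ₀, S_Ψ f := ⟨Ψ₀,f⟩Ψ₀ + ⟨Ψ₁,f⟩Ψ₁, and let S_Ψ^{1/2} be the unique positive semidefinite square root of the positive definite operator S_Ψ. Then c := S_Ψ^{1/2} a S_Ψ^{-1/2} satisfies cc* + c*c = 1, c² = 0, and c* = S_Ψ^{1/2} b S_Ψ^{-1/2}. -/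

import Mathlib

open Matrix
open scoped InnerProductSpace ComplexOrder

noncomputable section

/-- Action of a 2×2 complex matrix (an operator) on a vector of ℂ². -/
def act (A : Matrix (Fin 2) (Fin 2) ℂ) (x : EuclideanSpace ℂ (Fin 2)) :
    EuclideanSpace ℂ (Fin 2) := WithLp.toLp 2 (A.mulVec x)

lemma act_mul (A B : Matrix (Fin 2) (Fin 2) ℂ) (x : EuclideanSpace ℂ (Fin 2)) :
    act (A * B) x = act A (act B x) := by
  show WithLp.toLp 2 ((A * B) *ᵥ x.ofLp) = WithLp.toLp 2 (A *ᵥ (B *ᵥ x.ofLp))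
  rw [Matrix.mulVec_mulVec]

lemma act_one (x : EuclideanSpace ℂ (Fin 2)) : act 1 x = x := by
  simp [act]

lemma inner_adjoint (A : Matrix (Fin 2) (Fin 2) ℂ) (x y : EuclideanSpace ℂ (Fin 2)) :
    ⟪act Aᴴ x, y⟫_ℂ = ⟪x, act A y⟫_ℂ := by
  show dotProduct y.ofLp (star (Aᴴ.mulVec x.ofLp))
      = dotProduct (A.mulVec y.ofLp) (star x.ofLp)
  rw [Matrix.star_mulVec, Matrix.conjTranspose_conjTranspose, dotProduct_comm, ← dotProduct_mulVec,
    dotProduct_comm]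

lemma inner_adjoint' (A : Matrix (Fin 2) (Fin 2) ℂ) (x y : EuclideanSpace ℂ (Fin 2)) :
    ⟪x, act Aᴴ y⟫_ℂ = ⟪act A x, y⟫_ℂ := by
  rw [← inner_conj_symm, inner_adjoint, inner_conj_symm]

lemma matrix_ext_of_act (A B : Matrix (Fin 2) (Fin 2) ℂ)
    (h : ∀ x : EuclideanSpace ℂ (Fin 2), act A x = act B x) : A = B := by
  ext i j
  have h' : A *ᵥ (Pi.single j 1) = B *ᵥ (Pi.single j 1) :=
    congrArg WithLp.ofLp (h (WithLp.toLp 2 (Pi.single j 1)))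
  simpa using congrFun h' i

/-- With `S_Ψ^{1/2}` the positive semidefinite square root `R` of `S_Ψ`,
the operator `c = R a R⁻¹` is a fermion operator and `c* = R b R⁻¹`. -/
theorem stmt11 (a b SΨ R : Matrix (Fin 2) (Fin 2) ℂ)
    (hab : a * b + b * a = 1) (ha2 : a * a = 0) (hb2 : b * b = 0)
    (φ₀ Ψ₀ : EuclideanSpace ℂ (Fin 2))
    (hvacφ : act a φ₀ = 0) (hvacΨ : act bᴴ Ψ₀ = 0)
    (hnorm : ⟪φ₀, Ψ₀⟫_ℂ = 1)
    (hSΨ : ∀ f, act SΨ f = ⟪Ψ₀, f⟫_ℂ • Ψ₀ + ⟪act aᴴ Ψ₀, f⟫_ℂ • act aᴴ Ψ₀)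
    (hR : R.PosSemidef) (hR2 : R * R = SΨ) :
    (R * a * R⁻¹) * (R * a * R⁻¹)ᴴ + (R * a * R⁻¹)ᴴ * (R * a * R⁻¹) = 1 ∧
    (R * a * R⁻¹) * (R * a * R⁻¹) = 0 ∧
    (R * a * R⁻¹)ᴴ = R * b * R⁻¹ := by
  set Ψ₁ : EuclideanSpace ℂ (Fin 2) := act aᴴ Ψ₀ with hΨ₁
  set φ₁ : EuclideanSpace ℂ (Fin 2) := act b φ₀ with hφ₁
  -- biorthogonality of the two bases
  have h01 : ⟪φ₀, Ψ₁⟫_ℂ = 0 := by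
    rw [hΨ₁, inner_adjoint', hvacφ, inner_zero_left]
  have h10 : ⟪φ₁, Ψ₀⟫_ℂ = 0 := by
    rw [hφ₁, show b = bᴴᴴ from (Matrix.conjTranspose_conjTranspose b).symm,
      inner_adjoint, hvacΨ, inner_zero_right]
  have habΨ : act bᴴ Ψ₁ = Ψ₀ := by
    rw [hΨ₁, ← act_mul, ← Matrix.conjTranspose_mul]
    have hba : a * b = 1 - b * a := eq_sub_of_add_eq hab
    rw [hba, Matrix.conjTranspose_sub, Matrix.conjTranspose_one, Matrix.conjTranspose_mul]
    have : act (1 - aᴴ * bᴴ) Ψ₀ = act 1 Ψ₀ - act aᴴ (act bᴴ Ψ₀) := by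
      show WithLp.toLp 2 ((1 - aᴴ * bᴴ) *ᵥ Ψ₀.ofLp)
          = WithLp.toLp 2 (1 *ᵥ Ψ₀.ofLp) - WithLp.toLp 2 (aᴴ *ᵥ (bᴴ *ᵥ Ψ₀.ofLp))
      rw [Matrix.sub_mulVec, Matrix.mulVec_mulVec, WithLp.toLp_sub]
    rw [this, hvacΨ, act_one]
    simp [act]
  have h11 : ⟪φ₁, Ψ₁⟫_ℂ = 1 := by
    rw [hφ₁, show b = bᴴᴴ from (Matrix.conjTranspose_conjTranspose b).symm,
      inner_adjoint bᴴ φ₀ Ψ₁, habΨ, hnorm]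
  -- the key intertwining relation aᴴ SΨ = SΨ b
  have haΨ1 : act aᴴ Ψ₁ = 0 := by
    rw [hΨ₁, ← act_mul, ← Matrix.conjTranspose_mul, ha2]
    simp [act]
  have hkey : aᴴ * SΨ = SΨ * b := by
    apply matrix_ext_of_act
    intro f
    rw [act_mul, act_mul, hSΨ, hSΨ]
    have hlin : ∀ (A : Matrix (Fin 2) (Fin 2) ℂ) (c d : ℂ) (u v : EuclideanSpace ℂ (Fin 2)),
        act A (c • u + d • v) = c • act A u + d • act A v := by
      intro A c d u v
      show WithLp.toLp 2 (A *ᵥ (c • u.ofLp + d • v.ofLp))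
          = c • WithLp.toLp 2 (A *ᵥ u.ofLp) + d • WithLp.toLp 2 (A *ᵥ v.ofLp)
      rw [Matrix.mulVec_add, Matrix.mulVec_smul, Matrix.mulVec_smul, WithLp.toLp_add,
        WithLp.toLp_smul, WithLp.toLp_smul]
    rw [hlin, haΨ1, ← hΨ₁]
    rw [← inner_adjoint b Ψ₀ f, ← inner_adjoint b Ψ₁ f, hvacΨ, habΨ]
    simp
  -- invertibility of SΨ and hence of R
  set N : Matrix (Fin 2) (Fin 2) ℂ := Matrix.of (fun i j => (![Ψ₀, Ψ₁] j) i) with hN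
  set M : Matrix (Fin 2) (Fin 2) ℂ := Matrix.of (fun i j => (![φ₀, φ₁] j) i) with hM
  have hMN : Mᴴ * N = 1 := by
    simp only [PiLp.inner_apply, RCLike.inner_apply', Fin.sum_univ_two] at hnorm h01 h10 h11
    ext i j
    fin_cases i <;> fin_cases j <;>
    · simp [hM, hN, Matrix.mul_apply, Matrix.conjTranspose_apply, Fin.sum_univ_two,
        Matrix.one_apply]
      first
      | exact hnorm | exact h01 | exact h10 | exact h11
  have hSN : SΨ = N * Nᴴ := by
    apply matrix_ext_of_act
    intro f
    rw [hSΨ f]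
    ext i
    fin_cases i <;>
    · simp [hN, act, Matrix.mulVec, Matrix.mul_apply, dotProduct, Fin.sum_univ_two,
        Matrix.conjTranspose_apply, PiLp.inner_apply, RCLike.inner_apply]
      ring
  have hNu : IsUnit N := (Matrix.isUnit_iff_isUnit_det N).mpr (Matrix.isUnit_det_of_left_inverse hMN)
  have hSu : IsUnit SΨ := by
    rw [hSN]
    exact hNu.mul ((Matrix.isUnit_conjTranspose N).mpr hNu)
  have hRdet : IsUnit R.det := by
    have h6 : IsUnit SΨ.det := (Matrix.isUnit_iff_isUnit_det SΨ).mp hSu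
    rw [← hR2, Matrix.det_mul] at h6
    exact isUnit_of_mul_isUnit_left h6
  have hRinv : R⁻¹ * R = 1 := Matrix.nonsing_inv_mul R hRdet
  have hRinv' : R * R⁻¹ = 1 := Matrix.mul_nonsing_inv R hRdet
  have hRH : Rᴴ = R := hR.isHermitian
  -- the third claim
  have h4 : aᴴ * (R * R) = R * R * b := by rw [hR2]; exact hkey
  have h5 : R * b = R⁻¹ * aᴴ * R * R := by
    have h7 := congrArg (fun X => R⁻¹ * X) h4
    simp only [Matrix.mul_assoc] at h7 ⊢
    rw [h7, ← Matrix.mul_assoc R⁻¹ R, hRinv, Matrix.one_mul]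
  have h3 : (R * a * R⁻¹)ᴴ = R * b * R⁻¹ := by
    calc (R * a * R⁻¹)ᴴ
        = R⁻¹ᴴ * (aᴴ * Rᴴ) := by
          rw [Matrix.conjTranspose_mul, Matrix.conjTranspose_mul]
      _ = R⁻¹ * (aᴴ * R) := by rw [Matrix.conjTranspose_nonsing_inv, hRH]
      _ = R * b * R⁻¹ := by
          rw [h5]
          simp only [Matrix.mul_assoc]
          rw [hRinv', Matrix.mul_one]
  refine ⟨?_, ?_, h3⟩
  · rw [h3]
    simp only [Matrix.mul_assoc]
    simp only [← Matrix.mul_assoc R⁻¹ R, hRinv, Matrix.one_mul]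
    rw [← Matrix.mul_assoc a b, ← Matrix.mul_assoc b a, ← Matrix.mul_add, ← Matrix.add_mul,
      hab, Matrix.one_mul, hRinv']
  · simp only [Matrix.mul_assoc]
    simp only [← Matrix.mul_assoc R⁻¹ R, hRinv, Matrix.one_mul]
    rw [← Matrix.mul_assoc a a, ha2, Matrix.zero_mul, Matrix.mul_zero]
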